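/- arXiv:2203.00546 — 5 statements merged into one kernel-verified Lean document; each statement's English description precedes it below -/
import Mathlib

section
/- Proposition 1 (Upper bound of quantum risk, trace form). Let U and V be N×N complex unitary matrices with N/2 ≤ t ≤ N, and let x_1, …, x_t ∈ ℂ^N be linearly independent vectors that are pairwise nonorthogonal, i.e. ⟨x_j, x_k⟩ ≠ 0 for all 1 ≤ j, k ≤ t. Suppose that for each j there is a complex scalar c_j with |c_j| = 1 such that V x_j = c_j · (U x_j) (perfect training on the dataset {(x_j, U x_j)}). Then |tr(U† V)| ≥ 2t − N. -/
open Matrix Submodule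
open scoped InnerProductSpace

private instance finWellFoundedLT_aux (t : ℕ) : WellFoundedLT (Fin t) := inferInstance

private lemma trace_eq_sum_inner_aux {n : ℕ}
    (b : OrthonormalBasis (Fin n) ℂ (EuclideanSpace ℂ (Fin n)))
    (f : EuclideanSpace ℂ (Fin n) →ₗ[ℂ] EuclideanSpace ℂ (Fin n)) :
    LinearMap.trace ℂ _ f = ∑ i, ⟪b i, f (b i)⟫_ℂ := by
  rw [LinearMap.trace_eq_matrix_trace ℂ b.toBasis f, Matrix.trace]
  refine Finset.sum_congr rfl fun i _ => ?_
  rw [Matrix.diag_apply, LinearMap.toMatrix_apply, ← b.repr_apply_apply,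
    OrthonormalBasis.coe_toBasis_repr_apply, OrthonormalBasis.coe_toBasis]

private lemma trace_toEuclideanLin_aux {n : ℕ} (M : Matrix (Fin n) (Fin n) ℂ) :
    LinearMap.trace ℂ _ (Matrix.toEuclideanLin M) = M.trace := by
  rw [trace_eq_sum_inner_aux (EuclideanSpace.basisFun (Fin n) ℂ), Matrix.trace]
  refine Finset.sum_congr rfl fun i _ => ?_
  rw [← OrthonormalBasis.repr_apply_apply, EuclideanSpace.basisFun_repr, Matrix.diag_apply,
    EuclideanSpace.basisFun_apply]
  show (M *ᵥ Pi.single i 1) i = M i i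
  simp [Matrix.mulVec, dotProduct, Pi.single_apply, mul_ite, Finset.sum_ite_eq']

/-- Proposition 1 (upper bound of quantum risk, trace form). If `U, V` are
`N × N` unitaries, `N/2 ≤ t ≤ N`, the vectors `x 1, …, x t` are linearly
independent and pairwise nonorthogonal, and perfect training holds
(`V x_j = c_j • (U x_j)` with `|c_j| = 1`), then `|tr(U† V)| ≥ 2t − N`. -/
theorem trace_lower_bound_of_perfect_training
    {N t : ℕ} (hNt : N ≤ 2 * t) (htN : t ≤ N)
    (U V : Matrix (Fin N) (Fin N) ℂ)
    (hU : U ∈ Matrix.unitaryGroup (Fin N) ℂ)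
    (hV : V ∈ Matrix.unitaryGroup (Fin N) ℂ)
    (x : Fin t → (Fin N → ℂ))
    (hind : LinearIndependent ℂ x)
    (hnonorth : ∀ j k, star (x j) ⬝ᵥ x k ≠ 0)
    (c : Fin t → ℂ) (hc : ∀ j, ‖c j‖ = 1)
    (htrain : ∀ j, V.mulVec (x j) = c j • U.mulVec (x j)) :
    (2 * t - N : ℝ) ≤ ‖(Uᴴ * V).trace‖ := by
  rcases Nat.eq_zero_or_pos t with ht0 | htpos
  · subst ht0
    interval_cases N
    simp [Matrix.trace]
  set W : Matrix (Fin N) (Fin N) ℂ := Uᴴ * V with hW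
  have hUU : Uᴴ * U = 1 := by
    have := (Matrix.mem_unitaryGroup_iff'.mp hU)
    simpa [Matrix.star_eq_conjTranspose] using this
  have hWW : Wᴴ * W = 1 := by
    have hmem : W ∈ Matrix.unitaryGroup (Fin N) ℂ := by
      rw [hW, ← Matrix.star_eq_conjTranspose]
      exact mul_mem (Unitary.star_mem hU) hV
    have := (Matrix.mem_unitaryGroup_iff'.mp hmem)
    simpa [Matrix.star_eq_conjTranspose] using this
  have hWx : ∀ j, W *ᵥ x j = c j • x j := by
    intro j
    rw [hW, ← Matrix.mulVec_mulVec, htrain j, Matrix.mulVec_smul, Matrix.mulVec_mulVec,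
      hUU, Matrix.one_mulVec]
  have hWdot : ∀ v w : Fin N → ℂ, star (W *ᵥ v) ⬝ᵥ (W *ᵥ w) = star v ⬝ᵥ w := by
    intro v w
    rw [Matrix.star_mulVec, Matrix.dotProduct_mulVec, Matrix.vecMul_vecMul, hWW,
      Matrix.vecMul_one]
  -- all the phases agree
  set j0 : Fin t := ⟨0, htpos⟩
  set a : ℂ := (starRingEnd ℂ) (c j0) with haa
  have hc0 : a * c j0 = 1 := by
    rw [haa, mul_comm, Complex.mul_conj, ← Complex.sq_norm, hc j0]
    norm_num
  have hcc : ∀ j, c j = c j0 := by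
    intro j
    have h := hWdot (x j0) (x j)
    rw [hWx, hWx, star_smul, smul_dotProduct, dotProduct_smul] at h
    have h2 : (a * c j) * (star (x j0) ⬝ᵥ x j) = star (x j0) ⬝ᵥ x j := by
      simpa [haa, smul_smul, Complex.star_def, mul_assoc] using h
    have h3 : a * c j = 1 := mul_right_cancel₀ (hnonorth j0 j) (h2.trans (one_mul _).symm)
    have hne : a ≠ 0 := by
      intro h
      rw [h, zero_mul] at hc0; exact zero_ne_one hc0
    exact mul_left_cancel₀ hne (h3.trans hc0.symm)
  -- the rotated matrix fixes each `x j`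
  set W' : Matrix (Fin N) (Fin N) ℂ := a • W with hW'
  have hW'x : ∀ j, W' *ᵥ x j = x j := by
    intro j
    rw [hW', Matrix.smul_mulVec, hWx, smul_smul, hcc j, hc0, one_smul]
  have hW'dot : ∀ v w : Fin N → ℂ, star (W' *ᵥ v) ⬝ᵥ (W' *ᵥ w) = star v ⬝ᵥ w := by
    intro v w
    rw [hW', Matrix.smul_mulVec, Matrix.smul_mulVec, star_smul,
      smul_dotProduct, dotProduct_smul, smul_smul]
    have : star a * a = 1 := by
      rw [Complex.star_def, haa, Complex.conj_conj, Complex.mul_conj, ← Complex.sq_norm, hc j0]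
      norm_num
    rw [this, one_smul, hWdot]
  -- pass to Euclidean space
  set f : EuclideanSpace ℂ (Fin N) →ₗ[ℂ] EuclideanSpace ℂ (Fin N) := Matrix.toEuclideanLin W'
    with hf
  set x' : Fin t → EuclideanSpace ℂ (Fin N) :=
    fun j => (WithLp.equiv 2 (Fin N → ℂ)).symm (x j) with hx'
  have hfapp : ∀ v : EuclideanSpace ℂ (Fin N),
      f v = (WithLp.equiv 2 (Fin N → ℂ)).symm (W' *ᵥ (WithLp.equiv 2 _ v)) := fun v => rfl
  have hfx' : ∀ j, f (x' j) = x' j := by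
    intro j
    rw [hfapp]
    simp only [hx']
    rw [show (WithLp.equiv 2 (Fin N → ℂ)) ((WithLp.equiv 2 (Fin N → ℂ)).symm (x j)) = x j from
      (WithLp.equiv 2 (Fin N → ℂ)).apply_symm_apply _, hW'x]
  have hffix : ∀ v ∈ span ℂ (Set.range x'), f v = v := by
    intro v hv
    induction hv using Submodule.span_induction with
    | mem v h => obtain ⟨j, rfl⟩ := h; exact hfx' j
    | zero => simp
    | add u w _ _ hu hw => rw [map_add, hu, hw]
    | smul r v _ hv => rw [_root_.map_smul, hv]
  have hfinner : ∀ v w : EuclideanSpace ℂ (Fin N), ⟪f v, f w⟫_ℂ = ⟪v, w⟫_ℂ := by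
    intro v w
    rw [EuclideanSpace.inner_eq_star_dotProduct, EuclideanSpace.inner_eq_star_dotProduct,
      hfapp, hfapp]
    simp only [WithLp.equiv_symm_apply, WithLp.equiv_apply, WithLp.ofLp_toLp]
    rw [dotProduct_comm, hW'dot, dotProduct_comm]
  have hfnorm : ∀ v : EuclideanSpace ℂ (Fin N), ‖f v‖ = ‖v‖ := by
    intro v
    rw [@norm_eq_sqrt_re_inner ℂ, @norm_eq_sqrt_re_inner ℂ (E := EuclideanSpace ℂ (Fin N)) _ _ _ v,
      hfinner]
  have hind' : LinearIndependent ℂ x' := by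
    have : x' = (WithLp.linearEquiv 2 ℂ (Fin N → ℂ)).symm ∘ x := rfl
    rw [this]
    exact hind.map' _ (LinearEquiv.ker _)
  -- Gram–Schmidt orthonormal family spanning inside span of x'
  set g : Fin t → EuclideanSpace ℂ (Fin N) := InnerProductSpace.gramSchmidtNormed ℂ x' with hg
  have horth : Orthonormal ℂ g := InnerProductSpace.gramSchmidtNormed_orthonormal (𝕜 := ℂ) hind'
  have hg_mem : ∀ i, g i ∈ span ℂ (Set.range x') := by
    intro i
    rw [hg, InnerProductSpace.gramSchmidtNormed]
    refine Submodule.smul_mem _ _ ?_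
    exact span_mono (Set.image_subset_range _ _) (InnerProductSpace.gramSchmidt_mem_span ℂ x' le_rfl)
  -- extend to an orthonormal basis
  set s : Set (Fin N) := {i | (i : ℕ) < t} with hs
  set v : Fin N → EuclideanSpace ℂ (Fin N) :=
    fun i => if h : (i : ℕ) < t then g ⟨i, h⟩ else 0 with hv
  have hres : Orthonormal ℂ (s.restrict v) := by
    have heq : s.restrict v = g ∘ (fun i : s => (⟨i.1, i.2⟩ : Fin t)) := by
      funext i
      simp only [Set.restrict_apply, Function.comp_apply, hv]
      exact dif_pos i.2
    rw [heq]
    exact horth.comp _ (fun i j hij => by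
      apply Subtype.ext
      apply Fin.ext
      exact Fin.mk.inj_iff.mp hij)
  obtain ⟨b, hb⟩ := hres.exists_orthonormalBasis_extension_of_card_eq
    (by rw [finrank_euclideanSpace_fin, Fintype.card_fin])
  -- trace identities
  have htr : W'.trace = ∑ i, ⟪b i, f (b i)⟫_ℂ := by
    rw [← trace_toEuclideanLin_aux W', ← hf, trace_eq_sum_inner_aux b f]
  -- per-term estimates on the real part
  have hterm : ∀ i : Fin N, (if (i : ℕ) < t then (1 : ℝ) else -1) ≤ (⟪b i, f (b i)⟫_ℂ).re := by
    intro i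
    by_cases h : (i : ℕ) < t
    · have hbi : b i = g ⟨i, h⟩ := by
        rw [hb i h]
        simp only [hv]
        exact dif_pos h
      have : f (b i) = b i := by
        rw [hbi]; exact hffix _ (hg_mem _)
      rw [this, if_pos h, inner_self_eq_norm_sq_to_K, b.orthonormal.1 i]
      norm_num
    · rw [if_neg h]
      have h1 : ‖⟪b i, f (b i)⟫_ℂ‖ ≤ 1 := by
        calc ‖⟪b i, f (b i)⟫_ℂ‖ ≤ ‖b i‖ * ‖f (b i)‖ := norm_inner_le_norm _ _
        _ = 1 := by rw [hfnorm, b.orthonormal.1 i, one_mul]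
      have h2 := (abs_le.mp (Complex.abs_re_le_norm (⟪b i, f (b i)⟫_ℂ))).1
      have h1' : ‖⟪b i, f (b i)⟫_ℂ‖ ≤ 1 := h1
      linarith
  -- sum the estimates
  have hcard : (Finset.univ.filter fun i : Fin N => (i : ℕ) < t).card = t := by
    have : (Finset.univ.filter fun i : Fin N => (i : ℕ) < t)
        = Finset.univ.map (Fin.castLEEmb htN) := by
      ext i
      constructor
      · intro hi
        rw [Finset.mem_filter] at hi
        exact Finset.mem_map.mpr ⟨⟨i, hi.2⟩, Finset.mem_univ _, Fin.ext rfl⟩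
      · intro hi
        obtain ⟨j, -, rfl⟩ := Finset.mem_map.mp hi
        exact Finset.mem_filter.mpr ⟨Finset.mem_univ _, j.2⟩
    rw [this, Finset.card_map, Finset.card_univ, Fintype.card_fin]
  have hsum : (2 * t - N : ℝ) ≤ (W'.trace).re := by
    rw [htr]
    rw [Complex.re_sum]
    calc (2 * t - N : ℝ) = ∑ i : Fin N, (if (i : ℕ) < t then (1 : ℝ) else -1) := by
          rw [Finset.sum_ite, Finset.sum_const, Finset.sum_const, hcard]
          have h2 : (Finset.univ.filter fun i : Fin N => ¬ (i : ℕ) < t).card = N - t := by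
            have := Finset.card_filter_add_card_filter_not
              (s := (Finset.univ : Finset (Fin N))) (p := fun i : Fin N => (i : ℕ) < t)
            rw [hcard, Finset.card_univ, Fintype.card_fin] at this
            omega
          rw [h2]
          simp only [nsmul_eq_mul, smul_eq_mul]
          rw [Nat.cast_sub htN]
          ring
      _ ≤ ∑ i : Fin N, (⟪b i, f (b i)⟫_ℂ).re := Finset.sum_le_sum fun i _ => hterm i
  -- conclude
  have habs : ‖W'.trace‖ = ‖W.trace‖ := by
    rw [hW', Matrix.trace_smul, smul_eq_mul, norm_mul, haa, Complex.norm_conj, hc j0, one_mul]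
  calc (2 * t - N : ℝ) ≤ (W'.trace).re := hsum
    _ ≤ ‖W'.trace‖ := Complex.re_le_norm _
    _ = ‖W.trace‖ := habs
end

section
/- Corollary. Let U and V be N×N complex unitary matrices, and let x_1, …, x_N ∈ ℂ^N be linearly independent vectors that are pairwise nonorthogonal, i.e. ⟨x_j, x_k⟩ ≠ 0 for all 1 ≤ j, k ≤ N. Suppose that for each j there is a complex scalar c_j with |c_j| = 1 such that V x_j = c_j · (U x_j). Then there exists a complex number c with |c| = 1 such that V = c·U. (Hence a dataset of N = 2^n nonorthogonal but linearly independent pure states suffices to learn an n-qubit unitary exactly, up to global phase.) -/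
open Matrix

lemma unitary_preserves_dot {N : ℕ} (W : Matrix (Fin N) (Fin N) ℂ)
    (hW : W ∈ Matrix.unitaryGroup (Fin N) ℂ) (a b : Fin N → ℂ) :
    star (W.mulVec a) ⬝ᵥ W.mulVec b = star a ⬝ᵥ b := by
  rw [star_mulVec, Matrix.dotProduct_mulVec, Matrix.vecMul_vecMul]
  have h1 : Wᴴ * W = 1 := hW.1
  rw [h1, Matrix.vecMul_one]

/-- Corollary: a dataset of `N` linearly independent, pairwise nonorthogonal
pure states determines a unitary exactly up to a global phase. -/
theorem unitary_determined_by_nonorthogonal_basis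
    {N : ℕ} (U V : Matrix (Fin N) (Fin N) ℂ)
    (hU : U ∈ Matrix.unitaryGroup (Fin N) ℂ)
    (hV : V ∈ Matrix.unitaryGroup (Fin N) ℂ)
    (x : Fin N → (Fin N → ℂ))
    (hind : LinearIndependent ℂ x)
    (hnonorth : ∀ j k, star (x j) ⬝ᵥ x k ≠ 0)
    (c : Fin N → ℂ) (hc : ∀ j, ‖c j‖ = 1)
    (htrain : ∀ j, V.mulVec (x j) = c j • U.mulVec (x j)) :
    ∃ d : ℂ, ‖d‖ = 1 ∧ V = d • U := by
  rcases Nat.eq_zero_or_pos N with hN | hN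
  · subst hN
    refine ⟨1, by simp, ?_⟩
    ext i j
    exact i.elim0
  · set j0 : Fin N := ⟨0, hN⟩
    refine ⟨c j0, hc j0, ?_⟩
    -- all c k equal c j0
    have key : ∀ j k : Fin N, c k = c j := by
      intro j k
      have h1 : star (V.mulVec (x j)) ⬝ᵥ V.mulVec (x k) = star (x j) ⬝ᵥ x k :=
        unitary_preserves_dot V hV _ _
      have h2 : star (U.mulVec (x j)) ⬝ᵥ U.mulVec (x k) = star (x j) ⬝ᵥ x k :=
        unitary_preserves_dot U hU _ _
      rw [htrain j, htrain k, star_smul, smul_dotProduct,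
        dotProduct_smul, h2] at h1
      have hfac : (starRingEnd ℂ) (c j) * c k = 1 := by
        have h1' : ((starRingEnd ℂ) (c j) * c k) * (star (x j) ⬝ᵥ x k)
            = 1 * (star (x j) ⬝ᵥ x k) := by
          rw [one_mul]
          simpa [smul_smul, mul_assoc, Complex.star_def] using h1
        exact mul_right_cancel₀ (hnonorth j k) h1'
      have hjj : (starRingEnd ℂ) (c j) * c j = 1 := by
        have hns : ((Complex.normSq (c j) : ℝ) : ℂ) = 1 := by
          rw [Complex.normSq_eq_norm_sq, hc j]; norm_num
        rw [Complex.normSq_eq_conj_mul_self] at hns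
        exact hns
      have hne : (starRingEnd ℂ) (c j) ≠ 0 := by
        intro h0
        rw [h0, zero_mul] at hjj
        exact one_ne_zero hjj.symm
      exact mul_left_cancel₀ hne (hfac.trans hjj.symm)
    -- V and (c j0) • U agree on the basis x
    haveI : Nonempty (Fin N) := Fin.pos_iff_nonempty.mp hN
    have hcard : Fintype.card (Fin N) =
        Module.finrank ℂ (Fin N → ℂ) := by
      rw [Module.finrank_fin_fun, Fintype.card_fin]
    let b := basisOfLinearIndependentOfCardEqFinrank hind hcard
    have hb : ∀ i, b i = x i := fun i =>
      coe_basisOfLinearIndependentOfCardEqFinrank hind hcard ▸ rfl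
    have : Matrix.toLin' V = Matrix.toLin' ((c j0) • U) := by
      apply b.ext
      intro i
      rw [hb i]
      simp only [Matrix.toLin'_apply]
      rw [htrain i, key i j0, Matrix.smul_mulVec]
    exact Matrix.toLin'.injective this
end

section
/- Proposition (a dataset of n+1 elementary product states suffices). Fix n ≥ 1 and index 2^n × 2^n complex matrices by bit strings s ∈ {0,1}^n. Let ρ_0 be the matrix all of whose entries equal 2^{−n}, and for j = 1, …, n let ρ_j be the diagonal matrix whose (s, s) entry is 2^{−(n−1)} if the j-th bit of s is 0, and 0 otherwise. If U and V are 2^n × 2^n unitary matrices satisfying U ρ_i U† = V ρ_i V† for all i = 0, 1, …, n, then there exists a complex number c with |c| = 1 such that V = c·U. -/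
open Matrix

/-- A dataset of `n + 1` elementary product states suffices: if `U, V` are
`2^n × 2^n` unitaries (indexed by bit strings) with `U ρ_i U† = V ρ_i V†` for
the `n + 1` training states `ρ₀ = (|+⟩⟨+|)^{⊗n}` (all entries `2^{−n}`) and
`ρ_j = τ^{⊗(j−1)} ⊗ |0⟩⟨0| ⊗ τ^{⊗(n−j)}` (diagonal with entry `2^{−(n−1)}`
where the `j`-th bit is `0`), then `V = c • U` for a unit-modulus scalar. -/
theorem unitary_determined_by_product_state_dataset
    {n : ℕ} (hn : 1 ≤ n)
    (U V : Matrix (Fin n → Fin 2) (Fin n → Fin 2) ℂ)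
    (hU : U ∈ Matrix.unitaryGroup (Fin n → Fin 2) ℂ)
    (hV : V ∈ Matrix.unitaryGroup (Fin n → Fin 2) ℂ)
    (ρ₀ : Matrix (Fin n → Fin 2) (Fin n → Fin 2) ℂ)
    (hρ₀ : ρ₀ = Matrix.of (fun _ _ => ((2 : ℂ) ^ n)⁻¹))
    (ρ : Fin n → Matrix (Fin n → Fin 2) (Fin n → Fin 2) ℂ)
    (hρ : ∀ j, ρ j = Matrix.of
      (fun s t => if s = t ∧ s j = 0 then ((2 : ℂ) ^ (n - 1))⁻¹ else 0))
    (h0 : U * ρ₀ * Uᴴ = V * ρ₀ * Vᴴ)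
    (hj : ∀ j, U * ρ j * Uᴴ = V * ρ j * Vᴴ) :
    ∃ c : ℂ, ‖c‖ = 1 ∧ V = c • U := by
  have hU1 : Uᴴ * U = 1 := by
    have := hU.1; simpa [Matrix.star_eq_conjTranspose] using this
  have hV1 : Vᴴ * V = 1 := by
    have := hV.1; simpa [Matrix.star_eq_conjTranspose] using this
  have hV2 : V * Vᴴ = 1 := by
    have := hV.2; simpa [Matrix.star_eq_conjTranspose] using this
  set W := Vᴴ * U with hWdef
  have hc : ((2 : ℂ) ^ (n - 1))⁻¹ ≠ 0 :=
    inv_ne_zero (pow_ne_zero _ two_ne_zero)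
  have hc0 : ((2 : ℂ) ^ n)⁻¹ ≠ 0 :=
    inv_ne_zero (pow_ne_zero _ two_ne_zero)
  have hcomm : ∀ j, W * ρ j = ρ j * W := by
    intro j
    calc W * ρ j = Vᴴ * (U * ρ j * Uᴴ) * U := by
          rw [hWdef]; simp [Matrix.mul_assoc, hU1]
      _ = Vᴴ * (V * ρ j * Vᴴ) * U := by rw [hj j]
      _ = ρ j * W := by
          rw [hWdef]; simp [← Matrix.mul_assoc, hV1]
  have hcomm0 : W * ρ₀ = ρ₀ * W := by
    calc W * ρ₀ = Vᴴ * (U * ρ₀ * Uᴴ) * U := by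
          rw [hWdef]; simp [Matrix.mul_assoc, hU1]
      _ = Vᴴ * (V * ρ₀ * Vᴴ) * U := by rw [h0]
      _ = ρ₀ * W := by rw [hWdef]; simp [← Matrix.mul_assoc, hV1]
  -- W is diagonal
  have hdiag : ∀ s t, s ≠ t → W s t = 0 := by
    intro s t hst
    obtain ⟨j, hjst⟩ : ∃ j, s j ≠ t j := by
      by_contra h; push_neg at h; exact hst (funext h)
    have h : (W * ρ j) s t = (ρ j * W) s t := by rw [hcomm j]
    rw [hρ j] at h
    simp only [Matrix.mul_apply, Matrix.of_apply, ite_and, mul_ite, mul_zero,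
      ite_mul, zero_mul, Finset.sum_ite_eq, Finset.sum_ite_eq',
      Finset.mem_univ, if_true] at h
    have h2 : ∀ x : Fin 2, x = 0 ∨ x = 1 := by decide
    rcases h2 (s j) with hs | hs <;> rcases h2 (t j) with ht | ht <;>
      simp [hs, ht] at hjst ⊢ <;>
      · rw [hs, ht] at h
        simp at h
        tauto
  -- diagonal entries are all equal
  have hconst : ∀ s t, W s s = W t t := by
    intro s t
    have h : (W * ρ₀) s t = (ρ₀ * W) s t := by rw [hcomm0]
    rw [hρ₀] at h
    simp only [Matrix.mul_apply, Matrix.of_apply] at h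
    have hL : ∑ k, W s k * ((2 : ℂ) ^ n)⁻¹ = W s s * ((2 : ℂ) ^ n)⁻¹ := by
      apply Finset.sum_eq_single s
      · intro k _ hk; rw [hdiag s k (Ne.symm hk), zero_mul]
      · simp
    have hR : ∑ k, ((2 : ℂ) ^ n)⁻¹ * W k t = ((2 : ℂ) ^ n)⁻¹ * W t t := by
      apply Finset.sum_eq_single t
      · intro k _ hk; rw [hdiag k t hk, mul_zero]
      · simp
    rw [hL, hR] at h
    field_simp at h
    exact h
  set d : ℂ := W (fun _ => 0) (fun _ => 0) with hd
  have hWd : W = d • (1 : Matrix (Fin n → Fin 2) (Fin n → Fin 2) ℂ) := by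
    ext s t
    by_cases hst : s = t
    · subst hst
      simp [Matrix.one_apply, hd, hconst s (fun _ => 0)]
    · simp [Matrix.one_apply, hst, hdiag s t hst]
  -- W is unitary, so |d| = 1
  have hWU : Wᴴ * W = 1 := by
    rw [hWdef, Matrix.conjTranspose_mul, Matrix.conjTranspose_conjTranspose]
    calc Uᴴ * V * (Vᴴ * U) = Uᴴ * (V * Vᴴ) * U := by
          simp [Matrix.mul_assoc]
      _ = 1 := by simp [hV2, hU1]
  have habs : ‖d‖ = 1 := by
    have h := congrFun (congrFun (hWd ▸ hWU) (fun _ => 0)) (fun _ => 0)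
    simp [Matrix.mul_apply, Matrix.one_apply, Matrix.conjTranspose_apply,
      Matrix.smul_apply] at h
    have h' : (starRingEnd ℂ) d * d = 1 := by
      simpa [Matrix.smul_apply, Matrix.one_apply] using h
    have : ‖d‖ * ‖d‖ = 1 := by
      have := congrArg (‖·‖) h'
      simpa [norm_mul, Complex.norm_conj] using this
    nlinarith [norm_nonneg d]
  have hd0 : d ≠ 0 := by
    intro h; rw [h] at habs; simp at habs
  refine ⟨d⁻¹, by rw [norm_inv, habs]; norm_num, ?_⟩
  have hU_eq : U = d • V := by
    calc U = (V * Vᴴ) * U := by rw [hV2, Matrix.one_mul]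
      _ = V * W := by rw [Matrix.mul_assoc, hWdef]
      _ = V * (d • 1) := by rw [hWd]
      _ = d • V := by simp
  rw [hU_eq]
  rw [smul_smul, inv_mul_cancel₀ hd0, one_smul]
end

section
/- Lemma (one mixed state is not sufficient). Let N be an even positive integer and let ρ be any density matrix on ℂ^N, i.e., an N×N positive semidefinite complex matrix with trace 1. Then there exists an N×N unitary matrix W such that W ρ W† = ρ and tr(W) = 0. -/
open Matrix
open scoped ComplexOrder

/-- One mixed state is not sufficient: for any even `N > 0` and any density
matrix `ρ` on `ℂ^N` (positive semidefinite with trace `1`), there is a unitary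
`W` with `W ρ W† = ρ` and `tr W = 0`. -/
theorem exists_traceless_unitary_fixing_density_matrix
    {N : ℕ} (hN : 0 < N) (hNeven : Even N)
    (ρ : Matrix (Fin N) (Fin N) ℂ)
    (hρ : ρ.PosSemidef) (hρtr : ρ.trace = 1) :
    ∃ W ∈ Matrix.unitaryGroup (Fin N) ℂ, W * ρ * Wᴴ = ρ ∧ W.trace = 0 := by
  have hherm := hρ.1
  set U : Matrix (Fin N) (Fin N) ℂ := (hherm.eigenvectorUnitary : Matrix (Fin N) (Fin N) ℂ)
  have hU : U ∈ Matrix.unitaryGroup (Fin N) ℂ := hherm.eigenvectorUnitary.2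
  have hUU : U * star U = 1 := Matrix.mem_unitaryGroup_iff.mp hU
  have hUsU : star U * U = 1 := Matrix.mem_unitaryGroup_iff'.mp hU
  have hsU : star U ∈ Matrix.unitaryGroup (Fin N) ℂ := by
    rw [Matrix.mem_unitaryGroup_iff, star_star]; exact hUsU
  set V : Matrix (Fin N) (Fin N) ℂ := diagonal (fun i => (-1 : ℂ) ^ (i : ℕ))
  have hVstar : Vᴴ = V := by
    rw [show Vᴴ = diagonal (star fun i : Fin N => (-1 : ℂ) ^ (i : ℕ)) from
      diagonal_conjTranspose _]
    refine congrArg diagonal ?_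
    funext i
    simp [star_pow]
  have hVu : V ∈ Matrix.unitaryGroup (Fin N) ℂ := by
    rw [Matrix.mem_unitaryGroup_iff, ← star_eq_conjTranspose] at *
    rw [hVstar]
    simp only [V, diagonal_mul_diagonal, ← mul_pow]
    simp
  refine ⟨U * V * star U, mul_mem (mul_mem hU hVu) hsU, ?_, ?_⟩
  · have hD : star U * ρ * U = diagonal (RCLike.ofReal ∘ hherm.eigenvalues) :=
      by have h0 := hherm.conjStarAlgAut_star_eigenvectorUnitary
         rw [Unitary.conjStarAlgAut_star_apply] at h0
         exact h0
    have hVD : V * diagonal (RCLike.ofReal ∘ hherm.eigenvalues) * V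
        = diagonal (RCLike.ofReal ∘ hherm.eigenvalues) := by
      simp only [V, diagonal_mul_diagonal]
      refine congrArg diagonal ?_
      funext i
      have hp : ((-1:ℂ) ^ (i:ℕ)) * ((-1:ℂ) ^ (i:ℕ)) = 1 := by
        rw [← mul_pow]; simp
      rw [mul_right_comm, hp, one_mul]
    have hW : (U * V * star U)ᴴ = U * Vᴴ * star U := by
      simp only [conjTranspose_mul, star_eq_conjTranspose, conjTranspose_conjTranspose,
        Matrix.mul_assoc]
    rw [hW, hVstar]
    have hassoc : U * V * star U * ρ * (U * V * star U)
        = U * (V * (star U * ρ * U) * V) * star U := by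
      simp only [Matrix.mul_assoc]
    rw [hassoc, hD, hVD]
    conv_rhs => rw [hherm.spectral_theorem, Unitary.conjStarAlgAut_apply]
  · rw [Matrix.trace_mul_cycle, hUsU, one_mul]
    simp only [V, trace_diagonal]
    have h := neg_one_geom_sum (R := ℂ) (n := N)
    rw [if_pos hNeven] at h
    rw [← h, ← Fin.sum_univ_eq_sum_range (fun i => (-1 : ℂ) ^ i) N]
end

section
/- Proposition (two mixed states determine the unitary). Let ρ and σ be density matrices on ℂ^N that are full rank (positive definite) and have nondegenerate spectra (each has N pairwise distinct eigenvalues), and assume their eigenvectors are mutually nonorthogonal: for all nonzero v, w ∈ ℂ^N and reals λ, μ with ρ v = λ·v and σ w = μ·w, one has ⟨v, w⟩ ≠ 0. If W is an N×N unitary matrix satisfying W ρ W† = ρ and W σ W† = σ, then there exists a complex number c with |c| = 1 such that W = c·I. -/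
open Matrix
open scoped ComplexOrder

private lemma unitary_dotProduct {N : ℕ} {W : Matrix (Fin N) (Fin N) ℂ}
    (hW : W ∈ Matrix.unitaryGroup (Fin N) ℂ) (a b : Fin N → ℂ) :
    star (W *ᵥ a) ⬝ᵥ (W *ᵥ b) = star a ⬝ᵥ b := by
  rw [star_mulVec, ← dotProduct_mulVec, mulVec_mulVec]
  have h1 : Wᴴ * W = 1 := by
    simpa [Matrix.star_eq_conjTranspose] using Unitary.star_mul_self_of_mem hW
  rw [h1, one_mulVec]

private lemma herm_orth {N : ℕ} {A : Matrix (Fin N) (Fin N) ℂ} (hA : A.IsHermitian)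
    {v x : Fin N → ℂ} {l m : ℝ} (hv : A *ᵥ v = (l:ℂ) • v) (hx : A *ᵥ x = (m:ℂ) • x)
    (hne : l ≠ m) : star v ⬝ᵥ x = 0 := by
  have h1 : star v ⬝ᵥ (A *ᵥ x) = (m:ℂ) * (star v ⬝ᵥ x) := by
    rw [hx, dotProduct_smul, smul_eq_mul]
  have hsv : star v ᵥ* A = (l:ℂ) • star v := by
    have := congrArg star hv
    rw [star_mulVec, hA.eq, star_smul] at this
    rw [Complex.star_def, Complex.conj_ofReal] at this
    exact this
  have h2 : star v ⬝ᵥ (A *ᵥ x) = (l:ℂ) * (star v ⬝ᵥ x) := by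
    rw [dotProduct_mulVec, hsv, smul_dotProduct, smul_eq_mul]
  have h3 : ((l:ℂ) - m) * (star v ⬝ᵥ x) = 0 := by rw [sub_mul, h2.symm.trans h1]; ring
  rcases mul_eq_zero.1 h3 with h | h
  · exact absurd (by exact_mod_cast sub_eq_zero.1 h) hne
  · exact h

/-- eigenvectors (coerced) satisfy the eigen equation with complex scalar -/
private lemma eig_eq {N : ℕ} {A : Matrix (Fin N) (Fin N) ℂ} (hA : A.IsHermitian) (i : Fin N) :
    A *ᵥ ⇑(hA.eigenvectorBasis i) = ((hA.eigenvalues i : ℂ)) • ⇑(hA.eigenvectorBasis i) := by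
  rw [hA.mulVec_eigenvectorBasis, RCLike.real_smul_eq_coe_smul (K := ℂ)]
  rfl

private lemma eigvec_ne_zero {N : ℕ} {A : Matrix (Fin N) (Fin N) ℂ} (hA : A.IsHermitian)
    (i : Fin N) : (⇑(hA.eigenvectorBasis i) : Fin N → ℂ) ≠ 0 := by
  intro h
  have h1 := hA.star_eigenvectorUnitary_mulVec i
  rw [h, mulVec_zero] at h1
  have := congrFun h1.symm i
  simp [Pi.single_eq_same] at this

/-- if `W` commutes with `A` then each eigenvector of `A` (nondegenerate spectrum)
is an eigenvector of `W`. -/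
private lemma fixes_eigvec {N : ℕ} {A W : Matrix (Fin N) (Fin N) ℂ}
    (hA : A.IsHermitian) (hinj : Function.Injective hA.eigenvalues)
    (hcomm : W * A = A * W) (i : Fin N) :
    W *ᵥ ⇑(hA.eigenvectorBasis i)
      = (star ⇑(hA.eigenvectorBasis i) ⬝ᵥ (W *ᵥ ⇑(hA.eigenvectorBasis i)))
          • ⇑(hA.eigenvectorBasis i) := by
  set u : Fin N → ℂ := W *ᵥ ⇑(hA.eigenvectorBasis i) with hu
  have hueig : A *ᵥ u = ((hA.eigenvalues i : ℂ)) • u := by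
    rw [hu, mulVec_mulVec, ← hcomm, ← mulVec_mulVec, eig_eq hA i, mulVec_smul]
  have horth : ∀ j, j ≠ i → star ⇑(hA.eigenvectorBasis j) ⬝ᵥ u = 0 := fun j hj =>
    herm_orth hA (eig_eq hA j) hueig (fun h => hj (hinj h))
  set V : Matrix (Fin N) (Fin N) ℂ := (hA.eigenvectorUnitary : Matrix (Fin N) (Fin N) ℂ) with hV
  have hVu : star V *ᵥ u = (star ⇑(hA.eigenvectorBasis i) ⬝ᵥ u) • (Pi.single i 1 : Fin N → ℂ) := by
    funext j
    have : (star V *ᵥ u) j = star ⇑(hA.eigenvectorBasis j) ⬝ᵥ u := by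
      simp only [mulVec, dotProduct, Matrix.star_apply, Pi.star_apply, hV,
        hA.eigenvectorUnitary_apply]
    rw [this]
    by_cases hj : j = i
    · subst hj; simp
    · rw [horth j hj]; simp [Pi.single_eq_of_ne hj]
  have hVV : V * star V = 1 := Unitary.mul_star_self_of_mem hA.eigenvectorUnitary.2
  calc u = (V * star V) *ᵥ u := by rw [hVV, one_mulVec]
    _ = V *ᵥ (star V *ᵥ u) := (mulVec_mulVec u V (star V)).symm
    _ = (star ⇑(hA.eigenvectorBasis i) ⬝ᵥ u) • (V *ᵥ Pi.single i 1) := by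
        rw [hVu, mulVec_smul]
    _ = _ := by rw [hV, hA.eigenvectorUnitary_mulVec]

private lemma dot_self_eigvec {N : ℕ} {A : Matrix (Fin N) (Fin N) ℂ} (hA : A.IsHermitian)
    (i : Fin N) : star ⇑(hA.eigenvectorBasis i) ⬝ᵥ ⇑(hA.eigenvectorBasis i) = 1 := by
  have h := congrFun (hA.star_eigenvectorUnitary_mulVec i) i
  have h2 : ((star (hA.eigenvectorUnitary : Matrix (Fin N) (Fin N) ℂ)) *ᵥ
      ⇑(hA.eigenvectorBasis i)) i = star ⇑(hA.eigenvectorBasis i) ⬝ᵥ ⇑(hA.eigenvectorBasis i) := by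
    simp only [mulVec, dotProduct, Matrix.star_apply, Pi.star_apply,
      hA.eigenvectorUnitary_apply]
  rw [h2] at h
  simpa using h

/-- Two mixed states determine the unitary: if `ρ` and `σ` are full-rank
density matrices on `ℂ^N` with nondegenerate spectra and mutually nonorthogonal
eigenvectors, then any unitary `W` satisfying `W ρ W† = ρ` and `W σ W† = σ`
must be a unit-modulus multiple of the identity. -/
theorem unitary_fixing_two_mixed_states_is_phase
    {N : ℕ} (ρ σ : Matrix (Fin N) (Fin N) ℂ)
    (hρ : ρ.PosDef) (hσ : σ.PosDef)
    (hρtr : ρ.trace = 1) (hσtr : σ.trace = 1)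
    (hρnondeg : Function.Injective hρ.1.eigenvalues)
    (hσnondeg : Function.Injective hσ.1.eigenvalues)
    (hnonorth : ∀ (v w : Fin N → ℂ) (lam mu : ℝ), v ≠ 0 → w ≠ 0 →
      ρ.mulVec v = (lam : ℂ) • v → σ.mulVec w = (mu : ℂ) • w →
      star v ⬝ᵥ w ≠ 0)
    (W : Matrix (Fin N) (Fin N) ℂ)
    (hW : W ∈ Matrix.unitaryGroup (Fin N) ℂ)
    (hfixρ : W * ρ * Wᴴ = ρ) (hfixσ : W * σ * Wᴴ = σ) :
    ∃ c : ℂ, ‖c‖ = 1 ∧ W = c • (1 : Matrix (Fin N) (Fin N) ℂ) := by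
  -- N ≠ 0
  rcases Nat.eq_zero_or_pos N with hN | hN
  · subst hN
    simp [Matrix.trace] at hρtr
  have i0 : Fin N := ⟨0, hN⟩
  have hWW : Wᴴ * W = 1 := by
    simpa [Matrix.star_eq_conjTranspose] using Unitary.star_mul_self_of_mem hW
  have hWW' : W * Wᴴ = 1 := by
    simpa [Matrix.star_eq_conjTranspose] using Unitary.mul_star_self_of_mem hW
  have hcommρ : W * ρ = ρ * W := by
    have := congrArg (· * W) hfixρ
    simpa [Matrix.mul_assoc, hWW] using this
  have hcommσ : W * σ = σ * W := by
    have := congrArg (· * W) hfixσ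
    simpa [Matrix.mul_assoc, hWW] using this
  -- eigenvector data
  set v : Fin N → (Fin N → ℂ) := fun i => ⇑(hρ.1.eigenvectorBasis i) with hv
  set w : Fin N → (Fin N → ℂ) := fun j => ⇑(hσ.1.eigenvectorBasis j) with hw
  set c : Fin N → ℂ := fun i => star (v i) ⬝ᵥ (W *ᵥ v i) with hc
  set d : Fin N → ℂ := fun j => star (w j) ⬝ᵥ (W *ᵥ w j) with hd
  have hWv : ∀ i, W *ᵥ v i = c i • v i := fun i => fixes_eigvec hρ.1 hρnondeg hcommρ i
  have hWw : ∀ j, W *ᵥ w j = d j • w j := fun j => fixes_eigvec hσ.1 hσnondeg hcommσ j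
  have hcnorm : ∀ i, (starRingEnd ℂ) (c i) * c i = 1 := by
    intro i
    have h1 : star (W *ᵥ v i) ⬝ᵥ (W *ᵥ v i) = star (v i) ⬝ᵥ v i := unitary_dotProduct hW _ _
    rw [hWv i, star_smul, smul_dotProduct, dotProduct_smul, dot_self_eigvec hρ.1 i] at h1
    simpa [smul_eq_mul, Complex.star_def] using h1
  have hdnorm : ∀ j, (starRingEnd ℂ) (d j) * d j = 1 := by
    intro j
    have h1 : star (W *ᵥ w j) ⬝ᵥ (W *ᵥ w j) = star (w j) ⬝ᵥ w j := unitary_dotProduct hW _ _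
    rw [hWw j, star_smul, smul_dotProduct, dotProduct_smul, dot_self_eigvec hσ.1 j] at h1
    simpa [smul_eq_mul, Complex.star_def] using h1
  -- cross relation  conj (c i) * d j = 1
  have hcross : ∀ i j, (starRingEnd ℂ) (c i) * d j = 1 := by
    intro i j
    have hvw : star (v i) ⬝ᵥ w j ≠ 0 :=
      hnonorth (v i) (w j) (hρ.1.eigenvalues i) (hσ.1.eigenvalues j)
        (eigvec_ne_zero hρ.1 i) (eigvec_ne_zero hσ.1 j) (eig_eq hρ.1 i) (eig_eq hσ.1 j)
    have h1 : star (W *ᵥ v i) ⬝ᵥ (W *ᵥ w j) = star (v i) ⬝ᵥ w j := unitary_dotProduct hW _ _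
    rw [hWv i, hWw j, star_smul, smul_dotProduct, dotProduct_smul, smul_smul,
      smul_eq_mul, Complex.star_def] at h1
    have h2 : ((starRingEnd ℂ) (c i) * d j - 1) * (star (v i) ⬝ᵥ w j) = 0 := by
      rw [sub_mul, one_mul, h1, sub_self]
    rcases mul_eq_zero.1 h2 with h | h
    · linear_combination h
    · exact absurd h hvw
  -- all c i are equal to d i0
  have hceq : ∀ i, c i = d i0 := by
    intro i
    have h1 := hcross i i0
    have h2 := hcnorm i
    have hne : (starRingEnd ℂ) (c i) ≠ 0 := by
      intro h; rw [h, zero_mul] at h2; exact one_ne_zero h2.symm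
    have := h1.trans h2.symm
    exact (mul_left_cancel₀ hne this).symm
  refine ⟨d i0, ?_, ?_⟩
  · have h2 := hdnorm i0
    have : ‖d i0‖ ^ 2 = 1 := by
      have := congrArg (‖·‖) h2
      simpa [norm_mul, Complex.norm_conj, sq] using this
    nlinarith [norm_nonneg (d i0), this]
  · -- W = d i0 • 1
    set V : Matrix (Fin N) (Fin N) ℂ := (hρ.1.eigenvectorUnitary : Matrix (Fin N) (Fin N) ℂ)
      with hV
    have hVV : V * star V = 1 := Unitary.mul_star_self_of_mem hρ.1.eigenvectorUnitary.2
    have hWV : W * V = d i0 • V := by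
      ext i j
      have h1 : (W * V) i j = (W *ᵥ v j) i := by
        simp only [Matrix.mul_apply, mulVec, dotProduct, hV, hρ.1.eigenvectorUnitary_apply, hv]
      rw [h1, hWv j, hceq j]
      simp [hV, hρ.1.eigenvectorUnitary_apply, hv]
    calc W = W * (V * star V) := by rw [hVV, Matrix.mul_one]
      _ = (W * V) * star V := by rw [Matrix.mul_assoc]
      _ = (d i0 • V) * star V := by rw [hWV]
      _ = d i0 • (V * star V) := by rw [Matrix.smul_mul]
      _ = d i0 • 1 := by rw [hVV]
end
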